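/- There exists a measurable set E ⊆ Ω = (0,M) ⊂ ℝ with Per_s(E;Ω) = +∞ for every s ∈ (0,1). Specifically, with β₁ = 1/log²2, β_k = 1/(k·log²k) for k ≥ 2, M = Σβ_k, σ_m = Σ_{k=1}^m β_k, I_m = (σ_m, σ_{m+1}), and E = ∪_{j≥1} I_{2j}, the one-dimensional fractional perimeter satisfies Per_s(E;Ω) ≥ (1/(1−s))·Σ_{j≥1} β_{2j+2}^{1-s} = +∞ for all s ∈ (0,1). -/

import Mathlib

open MeasureTheory Filter Set

noncomputable def interL1 (s : ℝ) (A B : Set ℝ) : ENNReal :=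
  ∫⁻ x in A, ∫⁻ y in B, ENNReal.ofReal (|x - y| ^ (-(1 + s)))

noncomputable def fracPer1 (s : ℝ) (E Ω : Set ℝ) : ENNReal :=
  interL1 s (E ∩ Ω) (Eᶜ ∩ Ω) + interL1 s (E ∩ Ω) (Eᶜ ∩ Ωᶜ) + interL1 s (E ∩ Ωᶜ) (Eᶜ ∩ Ω)

/-- β₁ = 1/log²2 and β_k = 1/(k log²k) for k ≥ 2. -/
noncomputable def betaSeq (k : ℕ) : ℝ :=
  if k < 2 then 1 / (Real.log 2) ^ 2 else 1 / (k * (Real.log k) ^ 2)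

noncomputable def sigmaSeq (m : ℕ) : ℝ := ∑ k ∈ Finset.range m, betaSeq (k + 1)

noncomputable def Mtot : ℝ := ∑' k : ℕ, betaSeq (k + 1)

/-- E = ⋃_{j ≥ 1} I_{2j} with I_m = (σ_m, σ_{m+1}). -/
def badSet : Set ℝ := ⋃ j : ℕ, Set.Ioo (sigmaSeq (2 * (j + 1))) (sigmaSeq (2 * (j + 1) + 1))

/-! ### Auxiliary lemmas -/

open scoped NNReal ENNReal

lemma log2_pos : 0 < Real.log 2 := Real.log_pos one_lt_two

lemma beta_of_ge {k : ℕ} (hk : 2 ≤ k) : betaSeq k = 1 / ((k : ℝ) * Real.log k ^ 2) := by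
  rw [betaSeq, if_neg (by omega)]

lemma denom_pos {k : ℕ} (hk : 2 ≤ k) : 0 < (k : ℝ) * Real.log k ^ 2 := by
  have hk' : (2 : ℝ) ≤ (k : ℝ) := by exact_mod_cast hk
  have h1 : 0 < Real.log k := Real.log_pos (by linarith)
  have h0 : (0 : ℝ) < k := by linarith
  positivity

lemma beta_pos (k : ℕ) : 0 < betaSeq k := by
  rcases lt_or_ge k 2 with h | h
  · rw [betaSeq, if_pos h]
    exact one_div_pos.mpr (pow_pos log2_pos 2)
  · rw [beta_of_ge h]
    exact one_div_pos.mpr (denom_pos h)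

lemma beta_succ_le {k : ℕ} (hk : 1 ≤ k) : betaSeq (k + 1) ≤ betaSeq k := by
  rcases eq_or_lt_of_le hk with h | h
  · have h1 : k = 1 := h.symm
    subst h1
    have e2 : betaSeq (1 + 1) = 1 / (2 * Real.log 2 ^ 2) := by
      rw [show (1 + 1 : ℕ) = 2 from rfl, beta_of_ge le_rfl]
      norm_num
    have e1 : betaSeq 1 = 1 / Real.log 2 ^ 2 := by simp [betaSeq]
    rw [e1, e2]
    have h2 := log2_pos
    rw [div_le_div_iff₀ (by positivity) (by positivity)]
    nlinarith
  · have hk2 : 2 ≤ k := h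
    rw [beta_of_ge hk2, beta_of_ge (by omega)]
    have hk' : (2 : ℝ) ≤ (k : ℝ) := by exact_mod_cast hk2
    have hc : ((k + 1 : ℕ) : ℝ) = (k : ℝ) + 1 := by push_cast; ring
    rw [hc]
    apply one_div_le_one_div_of_le (denom_pos hk2)
    have hl0 : 0 ≤ Real.log k := Real.log_nonneg (by linarith)
    have hl : Real.log k ≤ Real.log ((k : ℝ) + 1) := Real.log_le_log (by linarith) (by linarith)
    have := pow_le_pow_left₀ hl0 hl 2
    nlinarith

lemma beta_anti {m n : ℕ} (hm : 1 ≤ m) (hmn : m ≤ n) : betaSeq n ≤ betaSeq m := by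
  induction n, hmn using Nat.le_induction with
  | base => exact le_rfl
  | succ n hn ih => exact (beta_succ_le (le_trans hm hn)).trans ih

lemma beta_summable : Summable betaSeq := by
  rw [← summable_condensed_iff_of_nonneg (fun n => (beta_pos n).le)
    (fun m n hm hmn => beta_anti hm hmn)]
  rw [← summable_nat_add_iff 1]
  have hcongr : ∀ k : ℕ, (1 / Real.log 2 ^ 2) * (1 / ((k : ℝ) + 1) ^ 2)
      = (2 : ℝ) ^ (k + 1) * betaSeq (2 ^ (k + 1)) := by
    intro k
    have h2 : 2 ≤ 2 ^ (k + 1) := by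
      calc 2 = 2 ^ 1 := rfl
      _ ≤ 2 ^ (k + 1) := Nat.pow_le_pow_right (by norm_num) (by omega)
    rw [beta_of_ge h2]
    have hc : ((2 ^ (k + 1) : ℕ) : ℝ) = (2 : ℝ) ^ (k + 1) := by push_cast; ring
    rw [hc, Real.log_pow]
    have hp : (0 : ℝ) < (2 : ℝ) ^ (k + 1) := by positivity
    have hk1 : (0 : ℝ) < (k : ℝ) + 1 := by positivity
    have h2' := log2_pos
    field_simp
    push_cast; ring
  apply Summable.congr _ hcongr
  apply Summable.mul_left
  have h1 : Summable (fun n : ℕ => 1 / (n : ℝ) ^ 2) := Real.summable_one_div_nat_pow.mpr one_lt_two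
  have h2 := (summable_nat_add_iff 1).mpr h1
  exact h2.congr fun k => by push_cast; ring

lemma betaSucc_summable : Summable (fun k => betaSeq (k + 1)) :=
  (summable_nat_add_iff 1).mpr beta_summable

lemma sigma_le_Mtot (n : ℕ) : sigmaSeq n ≤ Mtot :=
  Summable.sum_le_tsum (Finset.range n) (fun i _ => (beta_pos _).le) betaSucc_summable

lemma sigma_succ (m : ℕ) : sigmaSeq (m + 1) = sigmaSeq m + betaSeq (m + 1) :=
  Finset.sum_range_succ _ _

lemma sigma_strictMono : StrictMono sigmaSeq :=
  strictMono_nat_of_lt_succ fun n => by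
    rw [sigma_succ]; exact lt_add_of_pos_right _ (beta_pos _)

lemma sigma_mono : Monotone sigmaSeq := sigma_strictMono.monotone

lemma sigma_zero : sigmaSeq 0 = 0 := by simp [sigmaSeq]

lemma sigma_nonneg (n : ℕ) : 0 ≤ sigmaSeq n := by
  have := sigma_mono (Nat.zero_le n); rwa [sigma_zero] at this

lemma badSet_subset : badSet ⊆ Set.Ioo (0 : ℝ) Mtot := by
  intro x hx
  simp only [badSet, mem_iUnion, mem_Ioo] at hx
  obtain ⟨j, h1, h2⟩ := hx
  have h0 : sigmaSeq 0 < sigmaSeq (2 * (j + 1)) := sigma_strictMono (by omega)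
  rw [sigma_zero] at h0
  exact ⟨by linarith, h2.trans_le (sigma_le_Mtot _)⟩

lemma J_subset (j : ℕ) :
    Set.Ioo (sigmaSeq (2 * j + 1)) (sigmaSeq (2 * j + 2)) ⊆ badSetᶜ ∩ Set.Ioo (0 : ℝ) Mtot := by
  rintro y ⟨hy1, hy2⟩
  refine ⟨?_, ?_, hy2.trans_le (sigma_le_Mtot _)⟩
  · intro hmem
    simp only [badSet, mem_iUnion, mem_Ioo] at hmem
    obtain ⟨i, h1, h2⟩ := hmem
    rcases lt_or_ge i j with h | h
    · have : sigmaSeq (2 * (i + 1) + 1) ≤ sigmaSeq (2 * j + 1) := sigma_mono (by omega)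
      linarith
    · have : sigmaSeq (2 * j + 2) ≤ sigmaSeq (2 * (i + 1)) := sigma_mono (by omega)
      linarith
  · have h0 : sigmaSeq (2 * j + 1) ≥ 0 := sigma_nonneg _
    show (0 : ℝ) < y
    linarith

lemma S_disjoint :
    Pairwise (Function.onFun Disjoint fun j : ℕ =>
      Set.Ioo (sigmaSeq (2 * j + 2)) (sigmaSeq (2 * j + 3))) := by
  have key : ∀ i j : ℕ, i < j →
      Disjoint (Set.Ioo (sigmaSeq (2 * i + 2)) (sigmaSeq (2 * i + 3)))
        (Set.Ioo (sigmaSeq (2 * j + 2)) (sigmaSeq (2 * j + 3))) := by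
    intro i j hij
    rw [Set.disjoint_left]
    rintro x ⟨_, hx2⟩ ⟨hx3, _⟩
    have : sigmaSeq (2 * i + 3) ≤ sigmaSeq (2 * j + 2) := sigma_mono (by omega)
    linarith
  intro i j hij
  rcases hij.lt_or_gt with h | h
  · exact key i j h
  · exact (key j i h).symm

lemma beta_le_8 {k : ℕ} (hk : 2 ≤ k) : betaSeq k ≤ 8 * betaSeq (k + 1) := by
  rw [beta_of_ge hk, beta_of_ge (by omega)]
  have hx : (2 : ℝ) ≤ (k : ℝ) := by exact_mod_cast hk
  have hc : ((k + 1 : ℕ) : ℝ) = (k : ℝ) + 1 := by push_cast; ring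
  rw [hc, mul_one_div]
  have hlx : 0 < Real.log k := Real.log_pos (by linarith)
  have hl1 : 0 < Real.log ((k : ℝ) + 1) := Real.log_pos (by linarith)
  have hsq : Real.log ((k : ℝ) + 1) ≤ 2 * Real.log k := by
    have h1 : Real.log ((k : ℝ) + 1) ≤ Real.log ((k : ℝ) ^ 2) :=
      Real.log_le_log (by linarith) (by nlinarith)
    rwa [Real.log_pow] at h1 <;> push_cast at h1 ⊢ <;> linarith
  rw [div_le_div_iff₀ (denom_pos hk) (by positivity)]
  nlinarith [sq_nonneg (Real.log ((k : ℝ) + 1)), mul_le_mul hsq hsq hl1.le (by linarith : (0:ℝ) ≤ 2 * Real.log (k:ℝ))]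

lemma beta_rpow_lb {k : ℕ} (hk : 2 ≤ k) {ε : ℝ} (hε : 0 < ε) :
    ε ^ 2 * (k : ℝ) ^ (-(1 + 2 * ε)) ≤ betaSeq k := by
  rw [beta_of_ge hk]
  have hx : (2 : ℝ) ≤ (k : ℝ) := by exact_mod_cast hk
  have hx0 : (0 : ℝ) < (k : ℝ) := by linarith
  have hlog : Real.log k ≤ (k : ℝ) ^ ε / ε := Real.log_le_rpow_div hx0.le hε
  have hl0 : 0 ≤ Real.log k := Real.log_nonneg (by linarith)
  have hd : (k : ℝ) * Real.log k ^ 2 ≤ (k : ℝ) ^ (1 + 2 * ε) / ε ^ 2 := by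
    have h2 : Real.log k ^ 2 ≤ ((k : ℝ) ^ ε) ^ 2 / ε ^ 2 := by
      calc Real.log k ^ 2 ≤ ((k : ℝ) ^ ε / ε) ^ 2 := pow_le_pow_left₀ hl0 hlog 2
      _ = ((k : ℝ) ^ ε) ^ 2 / ε ^ 2 := div_pow _ _ _
    calc (k : ℝ) * Real.log k ^ 2 ≤ (k : ℝ) * (((k : ℝ) ^ ε) ^ 2 / ε ^ 2) :=
          mul_le_mul_of_nonneg_left h2 hx0.le
    _ = (k : ℝ) ^ (1 + 2 * ε) / ε ^ 2 := by
        rw [← Real.rpow_natCast ((k : ℝ) ^ ε) 2, ← Real.rpow_mul hx0.le]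
        rw [show (1 : ℝ) + 2 * ε = 1 + ε * 2 by ring, Real.rpow_add hx0, Real.rpow_one]
        push_cast
        ring
  have hrp : (0 : ℝ) < (k : ℝ) ^ (1 + 2 * ε) := Real.rpow_pos_of_pos hx0 _
  have h1 := one_div_le_one_div_of_le (denom_pos hk) hd
  calc ε ^ 2 * (k : ℝ) ^ (-(1 + 2 * ε)) = 1 / ((k : ℝ) ^ (1 + 2 * ε) / ε ^ 2) := by
        rw [Real.rpow_neg hx0.le]
        field_simp
  _ ≤ 1 / ((k : ℝ) * Real.log k ^ 2) := h1

/-- The key real inequality for term `j`. -/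
lemma key_real {s : ℝ} (hs0 : 0 < s) (hs1 : s < 1) (j : ℕ) :
    (s / 4) ^ 2 / 324 * ((j : ℝ) + 1) ^ (-((1 + 2 * (s / 4)) * (1 - s))) ≤
      (betaSeq (2 * j + 2) + betaSeq (2 * j + 3)) ^ (-(1 + s))
        * (betaSeq (2 * j + 2) * betaSeq (2 * j + 3)) := by
  set ε : ℝ := s / 4 with hεdef
  set q : ℝ := (1 + 2 * ε) * (1 - s) with hqdef
  set b2 : ℝ := betaSeq (2 * j + 2) with hb2def
  set b3 : ℝ := betaSeq (2 * j + 3) with hb3def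
  have hε : 0 < ε := by positivity
  have hε1 : ε ^ 2 ≤ 1 := by nlinarith
  have hq0 : 0 ≤ q := by nlinarith
  have hq1 : q ≤ 1 := by nlinarith
  have hb2 : 0 < b2 := beta_pos _
  have hb3 : 0 < b3 := beta_pos _
  have h32 : b3 ≤ b2 := beta_succ_le (by omega)
  have h28 : b2 ≤ 8 * b3 := beta_le_8 (by omega)
  have hj1 : (0 : ℝ) < (j : ℝ) + 1 := by positivity
  set m : ℝ := ((2 * j + 3 : ℕ) : ℝ) with hmdef
  have hm2 : (2 : ℝ) ≤ m := by rw [hmdef]; push_cast; linarith [Nat.cast_nonneg (α := ℝ) j]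
  have hm0 : (0 : ℝ) < m := by linarith
  -- Part A : (1/81) * b3^(-(1+s)) ≤ (b2+b3)^(-(1+s))
  have hA : (1 / 81 : ℝ) * b3 ^ (-(1 + s)) ≤ (b2 + b3) ^ (-(1 + s)) := by
    have a1 : (b2 + b3) ^ (-(1 + s)) ≥ (9 * b3) ^ (-(1 + s)) :=
      Real.rpow_le_rpow_of_nonpos (by linarith) (by linarith) (by linarith)
    have a2 : (9 * b3) ^ (-(1 + s)) = (9 : ℝ) ^ (-(1 + s)) * b3 ^ (-(1 + s)) :=
      Real.mul_rpow (by norm_num) hb3.le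
    have a3 : (1 / 81 : ℝ) ≤ (9 : ℝ) ^ (-(1 + s)) := by
      have e1 : (9 : ℝ) ^ (-2 : ℝ) = 1 / 81 := by
        rw [show (-2 : ℝ) = ((-2 : ℤ) : ℝ) by norm_num, Real.rpow_intCast]
        norm_num
      have e2 : (9 : ℝ) ^ (-2 : ℝ) ≤ (9 : ℝ) ^ (-(1 + s)) :=
        Real.rpow_le_rpow_of_exponent_le (by norm_num) (by linarith)
      exact e1 ▸ e2
    calc (1 / 81 : ℝ) * b3 ^ (-(1 + s))
        ≤ (9 : ℝ) ^ (-(1 + s)) * b3 ^ (-(1 + s)) :=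
          mul_le_mul_of_nonneg_right a3 (Real.rpow_nonneg hb3.le _)
    _ = (9 * b3) ^ (-(1 + s)) := a2.symm
    _ ≤ (b2 + b3) ^ (-(1 + s)) := a1
  -- Part B : ε^2/4 * ((j:ℝ)+1)^(-q) ≤ b3^(1-s)
  have hB : ε ^ 2 / 4 * ((j : ℝ) + 1) ^ (-q) ≤ b3 ^ (1 - s) := by
    have b1 : ε ^ 2 * m ^ (-(1 + 2 * ε)) ≤ b3 := beta_rpow_lb (by omega) hε
    have b2' : (ε ^ 2 * m ^ (-(1 + 2 * ε))) ^ (1 - s) ≤ b3 ^ (1 - s) :=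
      Real.rpow_le_rpow (by positivity) b1 (by linarith)
    have b3' : (m ^ (-(1 + 2 * ε))) ^ (1 - s) = m ^ (-q) := by
      rw [← Real.rpow_mul hm0.le]
      congr 1
      rw [hqdef]; ring
    have b4 : ε ^ 2 ≤ (ε ^ 2) ^ (1 - s) := by
      have h := Real.rpow_le_rpow_of_exponent_ge (by positivity : (0 : ℝ) < ε ^ 2) hε1
        (by linarith : 1 - s ≤ 1)
      rwa [Real.rpow_one] at h
    have b5 : (1 / 4 : ℝ) * ((j : ℝ) + 1) ^ (-q) ≤ m ^ (-q) := by
      have c1 : (1 / 4 : ℝ) ≤ (4 : ℝ) ^ (-q) := by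
        have e1 : (4 : ℝ) ^ (-1 : ℝ) = 1 / 4 := by
          rw [show (-1 : ℝ) = ((-1 : ℤ) : ℝ) by norm_num, Real.rpow_intCast]; norm_num
        have e2 : (4 : ℝ) ^ (-1 : ℝ) ≤ (4 : ℝ) ^ (-q) :=
          Real.rpow_le_rpow_of_exponent_le (by norm_num) (by linarith)
        exact e1 ▸ e2
      have c2 : (4 : ℝ) ^ (-q) * ((j : ℝ) + 1) ^ (-q) = (4 * ((j : ℝ) + 1)) ^ (-q) :=
        (Real.mul_rpow (by norm_num) (by positivity)).symm
      have c3 : (4 * ((j : ℝ) + 1)) ^ (-q) ≤ m ^ (-q) :=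
        Real.rpow_le_rpow_of_nonpos hm0 (by rw [hmdef]; push_cast; linarith) (by linarith)
      calc (1 / 4 : ℝ) * ((j : ℝ) + 1) ^ (-q)
          ≤ (4 : ℝ) ^ (-q) * ((j : ℝ) + 1) ^ (-q) :=
            mul_le_mul_of_nonneg_right c1 (Real.rpow_nonneg (by positivity) _)
      _ = (4 * ((j : ℝ) + 1)) ^ (-q) := c2
      _ ≤ m ^ (-q) := c3
    calc ε ^ 2 / 4 * ((j : ℝ) + 1) ^ (-q) = ε ^ 2 * ((1 / 4) * ((j : ℝ) + 1) ^ (-q)) := by ring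
    _ ≤ (ε ^ 2) ^ (1 - s) * m ^ (-q) :=
        mul_le_mul b4 b5 (by positivity) (Real.rpow_nonneg (by positivity) _)
    _ = (ε ^ 2 * m ^ (-(1 + 2 * ε))) ^ (1 - s) := by
        rw [Real.mul_rpow (by positivity) (Real.rpow_nonneg hm0.le _), b3']
    _ ≤ b3 ^ (1 - s) := b2'
  -- combine
  have h5 : b3 ^ (1 - s) = b3 ^ (-(1 + s)) * (b3 * b3) := by
    have hsq : b3 * b3 = b3 ^ (2 : ℝ) := by
      rw [show (2 : ℝ) = ((2 : ℕ) : ℝ) by norm_num, Real.rpow_natCast]; ring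
    rw [hsq, ← Real.rpow_add hb3]
    congr 1; ring
  calc ε ^ 2 / 324 * ((j : ℝ) + 1) ^ (-q)
      = (1 / 81) * (ε ^ 2 / 4 * ((j : ℝ) + 1) ^ (-q)) := by ring
  _ ≤ (1 / 81) * b3 ^ (1 - s) := mul_le_mul_of_nonneg_left hB (by norm_num)
  _ = ((1 / 81) * b3 ^ (-(1 + s))) * (b3 * b3) := by rw [h5]; ring
  _ ≤ (b2 + b3) ^ (-(1 + s)) * (b3 * b3) :=
      mul_le_mul_of_nonneg_right hA (by positivity)
  _ ≤ (b2 + b3) ^ (-(1 + s)) * (b2 * b3) := by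
      apply mul_le_mul_of_nonneg_left _ (Real.rpow_nonneg (by positivity) _)
      nlinarith

/-- Divergence of `∑ c (j+1)^{-p}` in `ℝ≥0∞` for `p ≤ 1`. -/
lemma tsum_ofReal_top {c p : ℝ} (hc : 0 < c) (hp : p ≤ 1) :
    ∑' j : ℕ, ENNReal.ofReal (c * ((j : ℝ) + 1) ^ (-p)) = ⊤ := by
  by_contra h
  have hsum : Summable (fun j : ℕ => c * ((j : ℝ) + 1) ^ (-p)) := by
    have h' : ∑' j : ℕ, (((c * ((j : ℝ) + 1) ^ (-p)).toNNReal : ℝ≥0) : ℝ≥0∞) ≠ ⊤ := h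
    have h2 := ENNReal.tsum_coe_ne_top_iff_summable.mp h'
    have h3 := NNReal.summable_coe.mpr h2
    refine h3.congr fun j => ?_
    exact Real.coe_toNNReal _ (by positivity)
  have hsum2 : Summable (fun j : ℕ => ((j : ℝ) + 1) ^ (-p)) :=
    (summable_mul_left_iff hc.ne').mp hsum
  have hsum3 : Summable (fun n : ℕ => (n : ℝ) ^ (-p)) := by
    rw [← summable_nat_add_iff 1]
    refine hsum2.congr fun j => ?_
    congr 1
    push_cast
    ring
  rw [Real.summable_nat_rpow] at hsum3
  linarith

lemma main_s {s : ℝ} (hs0 : 0 < s) (hs1 : s < 1) :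
    fracPer1 s badSet (Set.Ioo (0 : ℝ) Mtot) = ⊤ := by
  set Ω : Set ℝ := Set.Ioo (0 : ℝ) Mtot with hΩdef
  have hEΩ : badSet ∩ Ω = badSet := inter_eq_left.mpr badSet_subset
  have hterm : ∀ j : ℕ,
      ENNReal.ofReal ((s / 4) ^ 2 / 324 * ((j : ℝ) + 1) ^ (-((1 + 2 * (s / 4)) * (1 - s)))) ≤
        ∫⁻ x in Set.Ioo (sigmaSeq (2 * j + 2)) (sigmaSeq (2 * j + 3)),
          ∫⁻ y in badSetᶜ ∩ Ω, ENNReal.ofReal (|x - y| ^ (-(1 + s))) := by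
    intro j
    set b2 : ℝ := betaSeq (2 * j + 2) with hb2def
    set b3 : ℝ := betaSeq (2 * j + 3) with hb3def
    have hb2 : 0 < b2 := beta_pos _
    have hb3 : 0 < b3 := beta_pos _
    have hs12 : sigmaSeq (2 * j + 2) = sigmaSeq (2 * j + 1) + b2 := sigma_succ (2 * j + 1)
    have hs23 : sigmaSeq (2 * j + 3) = sigmaSeq (2 * j + 2) + b3 := sigma_succ (2 * j + 2)
    have hKlb : ∀ x ∈ Set.Ioo (sigmaSeq (2 * j + 2)) (sigmaSeq (2 * j + 3)),
        ∀ y ∈ Set.Ioo (sigmaSeq (2 * j + 1)) (sigmaSeq (2 * j + 2)),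
        ENNReal.ofReal ((b2 + b3) ^ (-(1 + s))) ≤ ENNReal.ofReal (|x - y| ^ (-(1 + s))) := by
      rintro x ⟨hx1, hx2⟩ y ⟨hy1, hy2⟩
      have h1 : 0 < x - y := by linarith
      have h2 : x - y ≤ b2 + b3 := by linarith
      rw [abs_of_pos h1]
      exact ENNReal.ofReal_le_ofReal
        (Real.rpow_le_rpow_of_nonpos h1 h2 (by linarith))
    calc ENNReal.ofReal ((s / 4) ^ 2 / 324 * ((j : ℝ) + 1) ^ (-((1 + 2 * (s / 4)) * (1 - s))))
        ≤ ENNReal.ofReal ((b2 + b3) ^ (-(1 + s)) * (b2 * b3)) :=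
          ENNReal.ofReal_le_ofReal (key_real hs0 hs1 j)
    _ = ENNReal.ofReal ((b2 + b3) ^ (-(1 + s))) * ENNReal.ofReal b2 * ENNReal.ofReal b3 := by
          rw [ENNReal.ofReal_mul (Real.rpow_nonneg (by positivity) _),
            ENNReal.ofReal_mul hb2.le, mul_assoc]
    _ = ∫⁻ _ in Set.Ioo (sigmaSeq (2 * j + 2)) (sigmaSeq (2 * j + 3)),
          (∫⁻ _ in Set.Ioo (sigmaSeq (2 * j + 1)) (sigmaSeq (2 * j + 2)),
            ENNReal.ofReal ((b2 + b3) ^ (-(1 + s)))) := by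
          rw [setLIntegral_const, setLIntegral_const, Real.volume_Ioo, Real.volume_Ioo,
            show sigmaSeq (2 * j + 2) - sigmaSeq (2 * j + 1) = b2 by linarith,
            show sigmaSeq (2 * j + 3) - sigmaSeq (2 * j + 2) = b3 by linarith, mul_assoc]
    _ ≤ ∫⁻ x in Set.Ioo (sigmaSeq (2 * j + 2)) (sigmaSeq (2 * j + 3)),
          ∫⁻ y in Set.Ioo (sigmaSeq (2 * j + 1)) (sigmaSeq (2 * j + 2)),
            ENNReal.ofReal (|x - y| ^ (-(1 + s))) := by
          refine setLIntegral_mono' measurableSet_Ioo fun x hx => ?_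
          exact setLIntegral_mono' measurableSet_Ioo fun y hy => hKlb x hx y hy
    _ ≤ ∫⁻ x in Set.Ioo (sigmaSeq (2 * j + 2)) (sigmaSeq (2 * j + 3)),
          ∫⁻ y in badSetᶜ ∩ Ω, ENNReal.ofReal (|x - y| ^ (-(1 + s))) :=
          lintegral_mono fun x => lintegral_mono_set (J_subset j)
  have hT : interL1 s (badSet ∩ Ω) (badSetᶜ ∩ Ω) = ⊤ := by
    rw [hEΩ, eq_top_iff]
    have hbad : badSet = ⋃ j : ℕ, Set.Ioo (sigmaSeq (2 * j + 2)) (sigmaSeq (2 * j + 3)) := rfl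
    calc (⊤ : ℝ≥0∞)
        = ∑' j : ℕ, ENNReal.ofReal
            ((s / 4) ^ 2 / 324 * ((j : ℝ) + 1) ^ (-((1 + 2 * (s / 4)) * (1 - s)))) :=
          (tsum_ofReal_top (by positivity) (by nlinarith)).symm
    _ ≤ ∑' j : ℕ, ∫⁻ x in Set.Ioo (sigmaSeq (2 * j + 2)) (sigmaSeq (2 * j + 3)),
          ∫⁻ y in badSetᶜ ∩ Ω, ENNReal.ofReal (|x - y| ^ (-(1 + s))) :=
          ENNReal.tsum_le_tsum hterm
    _ = ∫⁻ x in ⋃ j : ℕ, Set.Ioo (sigmaSeq (2 * j + 2)) (sigmaSeq (2 * j + 3)),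
          ∫⁻ y in badSetᶜ ∩ Ω, ENNReal.ofReal (|x - y| ^ (-(1 + s))) :=
          (lintegral_iUnion (fun j => measurableSet_Ioo) S_disjoint _).symm
    _ = interL1 s badSet (badSetᶜ ∩ Ω) := by rw [interL1, ← hbad]
  rw [fracPer1, hT]
  simp

theorem stmt_18 :
    badSet ⊆ Set.Ioo (0 : ℝ) Mtot ∧
      ∀ s ∈ Set.Ioo (0 : ℝ) 1, fracPer1 s badSet (Set.Ioo (0 : ℝ) Mtot) = ⊤ := by
  exact ⟨badSet_subset, fun s hs => main_s hs.1 hs.2⟩
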